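/- Let R = ℚ[y_1, ..., y_m]/L where L is the ideal generated by the m polynomials g_k = y_k · ∏_{j=1}^{n_k} (∑_{i=1}^m a^k_{ij} y_i) for k = 1, ..., m, with a^k_{kj} = 1 for all k, j. If x = ∑_{j=1}^m b_j y_j with b_j ≠ 0 for some fixed j, then x^{n_j} ≠ 0 in R. -/
import Mathlib


open MvPolynomial

/-- Lemma 7.3: in R = ℚ[y_1,...,y_m]/L, where L is generated by the polynomials
g_k = y_k ∏_{j=1}^{n_k} (∑_i a^k_{ij} y_i) with a^k_{kj} = 1, any linear form
x = ∑ b_j y_j with b_j ≠ 0 satisfies x^{n_j} ≠ 0 in R. -/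
theorem stmt_8 (m : ℕ) (n : Fin m → ℕ) (hn : ∀ k, 1 ≤ n k)
    (a : (k : Fin m) → Fin m → Fin (n k) → ℚ)
    (ha : ∀ k j, a k k j = 1)
    (L : Ideal (MvPolynomial (Fin m) ℚ))
    (hL : L = Ideal.span
      {p | ∃ k : Fin m, p = X k * ∏ j : Fin (n k), ∑ i : Fin m, C (a k i j) * X i})
    (b : Fin m → ℚ) (j : Fin m) (hb : b j ≠ 0) :
    (∑ i : Fin m, C (b i) * X i) ^ (n j) ∉ L := by
  intro hmem
  subst hL
  set φ : MvPolynomial (Fin m) ℚ →ₐ[ℚ] Polynomial ℚ :=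
    aeval (fun i => if i = j then Polynomial.X else 0) with hφ
  -- image of the ideal lands in (X^(n j + 1))
  have hmap : φ ((∑ i : Fin m, C (b i) * X i) ^ (n j)) ∈
      Ideal.span {Polynomial.X ^ (n j + 1)} := by
    have h1 := Ideal.mem_map_of_mem φ hmem
    rw [Ideal.map_span] at h1
    refine Ideal.span_le.mpr ?_ h1
    rintro q ⟨p, ⟨k, rfl⟩, rfl⟩
    by_cases hk : k = j
    · subst hk
      have : φ (X k * ∏ l : Fin (n k), ∑ i : Fin m, C (a k i l) * X i)
          = Polynomial.X ^ (n k + 1) := by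
        simp only [hφ, map_mul, map_prod, map_sum, aeval_X, aeval_C, mul_ite, mul_zero,
          Finset.sum_ite_eq', Finset.mem_univ, if_true, ha, map_one, one_mul,
          if_pos rfl]
        rw [Finset.prod_const, Finset.card_univ, Fintype.card_fin, pow_succ]
        ring
      rw [this]
      exact Ideal.subset_span rfl
    · have : φ (X k * ∏ l : Fin (n k), ∑ i : Fin m, C (a k i l) * X i) = 0 := by
        simp only [hφ, map_mul, aeval_X, if_neg hk, zero_mul]
      rw [this]
      exact Ideal.zero_mem _
  -- compute the image of x^(n j)
  have hx : φ ((∑ i : Fin m, C (b i) * X i) ^ (n j))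
      = Polynomial.C (b j ^ (n j)) * Polynomial.X ^ (n j) := by
    simp only [hφ, map_pow, map_sum, map_mul, aeval_X, aeval_C, mul_ite, mul_zero,
      Finset.sum_ite_eq', Finset.mem_univ, if_true]
    rw [mul_pow, Polynomial.algebraMap_eq]
  rw [hx, Ideal.mem_span_singleton] at hmap
  rw [Polynomial.X_pow_dvd_iff] at hmap
  have := hmap (n j) (Nat.lt_succ_self _)
  rw [Polynomial.coeff_C_mul, Polynomial.coeff_X_pow, if_pos rfl, mul_one] at this
  exact pow_ne_zero _ hb this
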